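/- Let R ⊇ ℚ be a commutative ring, H a free R-module of finite rank, and suppose T^i(t,u) ∈ End_R(H)[[t₁,…,t_n,u]] are connection matrices of a flat (T)-structure ∇_{∂_{t_i}} = ∂_{t_i} + u⁻¹T^i. Then there exists a unique gauge transformation P(t,u) ∈ GL(H[[t₁,…,t_n,u]]) with P(0,u) = id such that for every i, the gauge-transformed matrix u P⁻¹ ∂P/∂t_i + P⁻¹ T^i P is independent of u. -/

import Mathlib

/-!
Existence and uniqueness of framings for (T)-structures: if
`∇_{∂_{t_i}} = ∂_{t_i} + u⁻¹ T^i(t,u)` is a flat (T)-structure on `H ⊗ R[[t₁,…,t_n,u]]`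
(`H` a finite free module over a commutative ℚ-algebra `R`; endomorphisms of
`H ⊗ R[[t,u]]` are identified with `End_R(H)[[t,u]]`, where `t₁,…,t_n,u` are the `n+1`
formal variables, `u` being the last one), then there is a unique invertible gauge
transformation `P(t,u)` with `P(0,u) = id` such that every
`u P⁻¹ ∂P/∂t_i + P⁻¹ T^i P` is independent of `u`.
Flatness reads `u(∂_{t_i}T^j − ∂_{t_j}T^i) + [T^i,T^j] = 0`.
-/

noncomputable section

open MvPowerSeries

/-- The formal partial derivative of a multivariate formal power series in the `i`-th
variable, defined coefficientwise. -/
def fpderiv {m : ℕ} {A : Type*} [Ring A] (i : Fin m) (f : MvPowerSeries (Fin m) A) :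
    MvPowerSeries (Fin m) A :=
  fun k => ((k i : ℕ) + 1) • f (k + Finsupp.single i 1)

namespace Framing

open Finset.HasAntidiagonal (antidiagonal mem_antidiagonal)

variable {m : ℕ} {A : Type*} [Ring A]

theorem coeff_fpderiv (i : Fin m) (f : MvPowerSeries (Fin m) A) (k : Fin m →₀ ℕ) :
    coeff k (fpderiv i f) = (k i + 1) • coeff (k + Finsupp.single i 1) f := rfl

theorem fpderiv_add (i : Fin m) (f g : MvPowerSeries (Fin m) A) :
    fpderiv i (f + g) = fpderiv i f + fpderiv i g := by
  ext k
  simp [coeff_fpderiv, map_add, smul_add]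

theorem fpderiv_sub (i : Fin m) (f g : MvPowerSeries (Fin m) A) :
    fpderiv i (f - g) = fpderiv i f - fpderiv i g := by
  ext k
  simp [coeff_fpderiv, map_sub, smul_sub]

theorem fpderiv_one (i : Fin m) : fpderiv i (1 : MvPowerSeries (Fin m) A) = 0 := by
  ext k
  classical
  have h : k + Finsupp.single i 1 ≠ 0 := by
    intro h
    have := DFunLike.congr_fun h i
    simp at this
  simp [coeff_fpderiv, coeff_one, h]

theorem fpderiv_X (i s : Fin m) :
    fpderiv i (X s : MvPowerSeries (Fin m) A) = if i = s then 1 else 0 := by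
  classical
  ext k
  rcases eq_or_ne i s with rfl | hs
  · have h2 : k + Finsupp.single i 1 = Finsupp.single i 1 ↔ k = 0 := by
      constructor
      · intro h
        have h' : k + Finsupp.single i 1 = 0 + Finsupp.single i 1 := by rw [zero_add]; exact h
        exact add_right_cancel h'
      · rintro rfl; rw [zero_add]
    rcases eq_or_ne k 0 with rfl | hk
    · simp [coeff_fpderiv, coeff_X, coeff_one]
    · simp [coeff_fpderiv, coeff_X, coeff_one, h2, hk]
  · have h2 : k + Finsupp.single i 1 ≠ Finsupp.single s 1 := by
      intro h
      have := DFunLike.congr_fun h i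
      simp [Finsupp.single_apply, Ne.symm hs] at this
    simp [coeff_fpderiv, coeff_X, h2, hs]

end Framing

namespace Framing
open Finset.HasAntidiagonal (antidiagonal mem_antidiagonal)
variable {m : ℕ} {A : Type*} [Ring A]

theorem sum_shift (i : Fin m) (k : Fin m →₀ ℕ)
    (F : (Fin m →₀ ℕ) → (Fin m →₀ ℕ) → A) :
    ∑ p ∈ (antidiagonal (k + Finsupp.single i 1) : Finset ((Fin m →₀ ℕ) × (Fin m →₀ ℕ))), p.1 i • F p.1 p.2
      = ∑ p ∈ antidiagonal k, (p.1 i + 1) • F (p.1 + Finsupp.single i 1) p.2 := by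
  classical
  set e := Finsupp.single i 1 with he
  have hinj : Function.Injective (fun p : (Fin m →₀ ℕ) × (Fin m →₀ ℕ) => (p.1 + e, p.2)) := by
    rintro ⟨a, b⟩ ⟨c, d⟩ h
    simp only [Prod.mk.injEq] at h
    exact Prod.ext (add_right_cancel h.1) h.2
  set emb : ((Fin m →₀ ℕ) × (Fin m →₀ ℕ)) ↪ (Fin m →₀ ℕ) × (Fin m →₀ ℕ) :=
    ⟨fun p => (p.1 + e, p.2), hinj⟩ with hemb
  have hsub : (antidiagonal k).map emb ⊆ antidiagonal (k + e) := by
    intro p hp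
    rcases Finset.mem_map.1 hp with ⟨q, hq, rfl⟩
    rw [mem_antidiagonal] at hq ⊢
    simp only [hemb, Function.Embedding.coeFn_mk]
    rw [add_right_comm, hq]
  have hz : ∀ p ∈ antidiagonal (k + e), p ∉ (antidiagonal k).map emb →
      p.1 i • F p.1 p.2 = 0 := by
    intro p hp hnp
    have : p.1 i = 0 := by
      by_contra hne
      apply hnp
      have hle : e ≤ p.1 := by
        rw [he]
        exact Finsupp.single_le_iff.2 (Nat.one_le_iff_ne_zero.2 hne)
      have hp1 : (p.1 - e) + e = p.1 := tsub_add_cancel_of_le hle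
      refine Finset.mem_map.2 ⟨(p.1 - e, p.2), ?_, ?_⟩
      · rw [mem_antidiagonal] at hp ⊢
        have : ((p.1 - e) + p.2) + e = k + e := by
          rw [add_right_comm, hp1, hp]
        exact add_right_cancel this
      · simp only [hemb, Function.Embedding.coeFn_mk, hp1]
    rw [this, zero_smul]
  rw [← Finset.sum_subset hsub hz, Finset.sum_map]
  refine Finset.sum_congr rfl fun p _ => ?_
  simp only [hemb, he, Function.Embedding.coeFn_mk, Finsupp.add_apply, Finsupp.single_eq_same]

theorem sum_shift' (i : Fin m) (k : Fin m →₀ ℕ)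
    (F : (Fin m →₀ ℕ) → (Fin m →₀ ℕ) → A) :
    ∑ p ∈ (antidiagonal (k + Finsupp.single i 1) : Finset ((Fin m →₀ ℕ) × (Fin m →₀ ℕ))), p.2 i • F p.1 p.2
      = ∑ p ∈ antidiagonal k, (p.2 i + 1) • F p.1 (p.2 + Finsupp.single i 1) := by
  classical
  set e := Finsupp.single i 1 with he
  have hinj : Function.Injective (fun p : (Fin m →₀ ℕ) × (Fin m →₀ ℕ) => (p.1, p.2 + e)) := by
    rintro ⟨a, b⟩ ⟨c, d⟩ h
    simp only [Prod.mk.injEq] at h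
    exact Prod.ext h.1 (add_right_cancel h.2)
  set emb : ((Fin m →₀ ℕ) × (Fin m →₀ ℕ)) ↪ (Fin m →₀ ℕ) × (Fin m →₀ ℕ) :=
    ⟨fun p => (p.1, p.2 + e), hinj⟩ with hemb
  have hsub : (antidiagonal k).map emb ⊆ antidiagonal (k + e) := by
    intro p hp
    rcases Finset.mem_map.1 hp with ⟨q, hq, rfl⟩
    rw [mem_antidiagonal] at hq ⊢
    simp only [hemb, Function.Embedding.coeFn_mk]
    rw [← add_assoc, hq]
  have hz : ∀ p ∈ antidiagonal (k + e), p ∉ (antidiagonal k).map emb →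
      p.2 i • F p.1 p.2 = 0 := by
    intro p hp hnp
    have : p.2 i = 0 := by
      by_contra hne
      apply hnp
      have hle : e ≤ p.2 := by
        rw [he]
        exact Finsupp.single_le_iff.2 (Nat.one_le_iff_ne_zero.2 hne)
      have hp2 : (p.2 - e) + e = p.2 := tsub_add_cancel_of_le hle
      refine Finset.mem_map.2 ⟨(p.1, p.2 - e), ?_, ?_⟩
      · rw [mem_antidiagonal] at hp ⊢
        have : (p.1 + (p.2 - e)) + e = k + e := by
          rw [add_assoc, hp2, hp]
        exact add_right_cancel this
      · simp only [hemb, Function.Embedding.coeFn_mk, hp2]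
    rw [this, zero_smul]
  rw [← Finset.sum_subset hsub hz, Finset.sum_map]
  refine Finset.sum_congr rfl fun p _ => ?_
  simp only [hemb, he, Function.Embedding.coeFn_mk, Finsupp.add_apply, Finsupp.single_eq_same]

theorem fpderiv_mul (i : Fin m) (f g : MvPowerSeries (Fin m) A) :
    fpderiv i (f * g) = fpderiv i f * g + f * fpderiv i g := by
  classical
  ext k
  rw [map_add, coeff_fpderiv, coeff_mul, coeff_mul, coeff_mul, Finset.smul_sum]
  have step : ∀ p ∈ antidiagonal (k + Finsupp.single i 1),
      (k i + 1) • (coeff p.1 f * coeff p.2 g)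
        = p.1 i • (coeff p.1 f * coeff p.2 g)
          + p.2 i • (coeff p.1 f * coeff p.2 g) := by
    intro p hp
    rw [mem_antidiagonal] at hp
    have : p.1 i + p.2 i = k i + 1 := by
      have := DFunLike.congr_fun hp i
      simpa [Finsupp.add_apply, Finsupp.single_eq_same] using this
    rw [← add_smul, this]
  rw [Finset.sum_congr rfl step, Finset.sum_add_distrib,
    sum_shift i k (fun a b => coeff a f * coeff b g),
    sum_shift' i k (fun a b => coeff a f * coeff b g)]
  congr 1
  · refine Finset.sum_congr rfl fun p _ => ?_
    rw [coeff_fpderiv, smul_mul_assoc]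
  · refine Finset.sum_congr rfl fun p _ => ?_
    rw [coeff_fpderiv, mul_smul_comm]

theorem fpderiv_comm (i j : Fin m) (f : MvPowerSeries (Fin m) A) :
    fpderiv i (fpderiv j f) = fpderiv j (fpderiv i f) := by
  classical
  ext k
  rw [coeff_fpderiv, coeff_fpderiv, coeff_fpderiv, coeff_fpderiv, smul_smul, smul_smul]
  rw [add_right_comm k (Finsupp.single j 1) (Finsupp.single i 1)]
  congr 1
  simp only [Finsupp.add_apply, Finsupp.single_apply]
  rcases eq_or_ne i j with rfl | hij
  · simp
  · simp [hij, Ne.symm hij]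
    ring

end Framing

namespace Framing
open Finset.HasAntidiagonal (antidiagonal mem_antidiagonal)

variable {n : ℕ} {A : Type*} [Ring A]

/-- the `u`-variable -/
def ul (n : ℕ) : Fin (n + 1) := Fin.last n

/-- the exponent of `u` -/
def eu (n : ℕ) : Fin (n + 1) →₀ ℕ := Finsupp.single (Fin.last n) 1

/-- total degree in the `t`-variables -/
def tdeg (k : Fin (n + 1) →₀ ℕ) : ℕ := ∑ j : Fin n, k j.castSucc

theorem tdeg_add (a b : Fin (n + 1) →₀ ℕ) : tdeg (a + b) = tdeg a + tdeg b := by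
  simp [tdeg, Finsupp.add_apply, Finset.sum_add_distrib]

theorem tdeg_eu : tdeg (eu n) = 0 := by
  apply Finset.sum_eq_zero
  intro j _
  rw [eu, Finsupp.single_apply, if_neg]
  exact (Fin.castSucc_lt_last j).ne'

theorem tdeg_add_eu (k : Fin (n + 1) →₀ ℕ) : tdeg (k + eu n) = tdeg k := by
  rw [tdeg_add, tdeg_eu, add_zero]

theorem tdeg_eq_zero_iff (k : Fin (n + 1) →₀ ℕ) :
    tdeg k = 0 ↔ ∀ j : Fin n, k j.castSucc = 0 := by
  rw [tdeg, Finset.sum_eq_zero_iff]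
  simp

theorem eq_single_of_tdeg_eq_zero {k : Fin (n + 1) →₀ ℕ} (h : tdeg k = 0) :
    k = Finsupp.single (Fin.last n) (k (Fin.last n)) := by
  rw [tdeg_eq_zero_iff] at h
  ext j
  rcases Fin.eq_castSucc_or_eq_last j with ⟨j', rfl⟩ | rfl
  · rw [h j', Finsupp.single_apply, if_neg (Fin.castSucc_lt_last j').ne']
  · rw [Finsupp.single_eq_same]

theorem coeff_X_mul' (s : Fin (n + 1)) (k : Fin (n + 1) →₀ ℕ) (f : MvPowerSeries (Fin (n + 1)) A) :
    coeff k (X s * f) =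
      if Finsupp.single s 1 ≤ k then coeff (k - Finsupp.single s 1) f else 0 := by
  rw [X_def, coeff_monomial_mul]
  split_ifs <;> simp

theorem coeff_X_mul_zero {s : Fin (n + 1)} {k : Fin (n + 1) →₀ ℕ}
    (h : k s = 0) (f : MvPowerSeries (Fin (n + 1)) A) : coeff k (X s * f) = 0 := by
  rw [coeff_X_mul', if_neg]
  rw [Finsupp.single_le_iff, h]
  omega

theorem coeff_add_X_mul (s : Fin (n + 1)) (k : Fin (n + 1) →₀ ℕ)
    (f : MvPowerSeries (Fin (n + 1)) A) :
    coeff (k + Finsupp.single s 1) (X s * f) = coeff k f := by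
  rw [coeff_X_mul', if_pos le_add_self, add_tsub_cancel_right]

theorem X_mul_comm (s : Fin (n + 1)) (f : MvPowerSeries (Fin (n + 1)) A) :
    X s * f = f * X s := ((commute_X f s).symm).eq

/-- Euler operator: multiply the coefficient of each monomial by its `t`-degree. -/
def euler (f : MvPowerSeries (Fin (n + 1)) A) : MvPowerSeries (Fin (n + 1)) A :=
  fun k => tdeg k • f k

theorem coeff_euler (f : MvPowerSeries (Fin (n + 1)) A) (k : Fin (n + 1) →₀ ℕ) :
    coeff k (euler f) = tdeg k • coeff k f := rfl

theorem euler_eq_sum (f : MvPowerSeries (Fin (n + 1)) A) :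
    (∑ j : Fin n, X j.castSucc * fpderiv j.castSucc f) = euler f := by
  ext k
  rw [map_sum, coeff_euler, tdeg, Finset.sum_smul]
  refine Finset.sum_congr rfl fun j _ => ?_
  rcases Nat.eq_zero_or_pos (k j.castSucc) with h | h
  · rw [coeff_X_mul_zero h, h, zero_smul]
  · have hle : Finsupp.single j.castSucc 1 ≤ k := Finsupp.single_le_iff.2 h
    rw [coeff_X_mul', if_pos hle, coeff_fpderiv, tsub_add_cancel_of_le hle]
    congr 1
    rw [Finsupp.tsub_apply, Finsupp.single_eq_same]
    omega

end Framing

namespace Framing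
open Finset.HasAntidiagonal (antidiagonal mem_antidiagonal)

variable {n : ℕ} {A : Type*} [Ring A]

theorem fpderiv_inv (ic : Fin (n + 1)) {P Q : MvPowerSeries (Fin (n + 1)) A}
    (hQP : Q * P = 1) (hPQ : P * Q = 1) :
    fpderiv ic Q = -(Q * fpderiv ic P * Q) := by
  have h1 : fpderiv ic (Q * P) = 0 := by rw [hQP, fpderiv_one]
  rw [fpderiv_mul] at h1
  have h2 : fpderiv ic Q * P = -(Q * fpderiv ic P) := by
    rw [eq_neg_iff_add_eq_zero]; exact h1
  calc fpderiv ic Q = fpderiv ic Q * (P * Q) := by rw [hPQ, mul_one]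
    _ = (fpderiv ic Q * P) * Q := by rw [mul_assoc]
    _ = -(Q * fpderiv ic P) * Q := by rw [h2]
    _ = -(Q * fpderiv ic P * Q) := by rw [neg_mul]

theorem gauged_flat {P Q : MvPowerSeries (Fin (n + 1)) A}
    (hQP : Q * P = 1) (hPQ : P * Q = 1) (Ti Tj : MvPowerSeries (Fin (n + 1)) A)
    (i j : Fin n)
    (hflat : X (Fin.last n) * (fpderiv i.castSucc Tj - fpderiv j.castSucc Ti) +
      (Ti * Tj - Tj * Ti) = 0) :
    X (Fin.last n) *
        (fpderiv i.castSucc (X (Fin.last n) * (Q * fpderiv j.castSucc P) + Q * Tj * P)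
          - fpderiv j.castSucc (X (Fin.last n) * (Q * fpderiv i.castSucc P) + Q * Ti * P))
      + ((X (Fin.last n) * (Q * fpderiv i.castSucc P) + Q * Ti * P) *
           (X (Fin.last n) * (Q * fpderiv j.castSucc P) + Q * Tj * P)
         - (X (Fin.last n) * (Q * fpderiv j.castSucc P) + Q * Tj * P) *
           (X (Fin.last n) * (Q * fpderiv i.castSucc P) + Q * Ti * P)) = 0 := by
  set U : MvPowerSeries (Fin (n + 1)) A := X (Fin.last n) with hU
  have hDU : ∀ ic : Fin n, fpderiv ic.castSucc U = 0 := by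
    intro ic
    rw [hU, fpderiv_X, if_neg (Fin.castSucc_lt_last ic).ne]
  have hXr : ∀ x y : MvPowerSeries (Fin (n + 1)) A, x * (U * y) = U * (x * y) := by
    intro x y
    rw [← mul_assoc, ← X_mul_comm, mul_assoc]
  have hXe : ∀ x : MvPowerSeries (Fin (n + 1)) A, x * U = U * x :=
    fun x => (X_mul_comm _ x).symm
  have hpq' : ∀ x : MvPowerSeries (Fin (n + 1)) A, P * (Q * x) = x := by
    intro x; rw [← mul_assoc, hPQ, one_mul]
  have hqp' : ∀ x : MvPowerSeries (Fin (n + 1)) A, Q * (P * x) = x := by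
    intro x; rw [← mul_assoc, hQP, one_mul]
  have hDQ : ∀ ic : Fin n, fpderiv ic.castSucc Q = -(Q * fpderiv ic.castSucc P * Q) :=
    fun ic => fpderiv_inv _ hQP hPQ
  have key : Q * (U * (fpderiv i.castSucc Tj - fpderiv j.castSucc Ti) +
      (Ti * Tj - Tj * Ti)) * P = 0 := by
    rw [hflat]; rw [mul_zero, zero_mul]
  simp only [fpderiv_add, fpderiv_mul, hDU i, hDU j, hDQ i, hDQ j, zero_mul, mul_zero,
    add_zero, zero_add]
  rw [fpderiv_comm j.castSucc i.castSucc P]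
  rw [← key]
  simp only [mul_add, add_mul, mul_sub, sub_mul, neg_mul, mul_neg, mul_assoc, zero_mul,
    mul_one, one_mul, hXr, hXe, hpq', hqp']
  abel

theorem fpderiv_sum (ic : Fin (n + 1)) {ι : Type*} (s : Finset ι)
    (f : ι → MvPowerSeries (Fin (n + 1)) A) :
    fpderiv ic (∑ j ∈ s, f j) = ∑ j ∈ s, fpderiv ic (f j) := by
  ext k
  rw [map_sum, coeff_fpderiv, map_sum, Finset.smul_sum]
  exact Finset.sum_congr rfl fun j _ => rfl

private theorem rearrange {S : Type*} [AddCommGroup S] {x y z : S} (h : x - y + z = 0) :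
    x = y - z := by
  rw [← sub_eq_zero]
  calc x - (y - z) = x - y + z := by abel
  _ = 0 := h

/-- the gauge-transformed connection matrices -/
def Ahat (T : Fin n → MvPowerSeries (Fin (n + 1)) A) (P Q : MvPowerSeries (Fin (n + 1)) A)
    (i : Fin n) : MvPowerSeries (Fin (n + 1)) A :=
  X (Fin.last n) * (Q * fpderiv i.castSucc P) + Q * T i * P

/-- the contraction of the gauged connection with the Euler field -/
def Bser (T : Fin n → MvPowerSeries (Fin (n + 1)) A) (P Q : MvPowerSeries (Fin (n + 1)) A) :
    MvPowerSeries (Fin (n + 1)) A :=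
  ∑ j : Fin n, X j.castSucc * Ahat T P Q j

theorem euler_Ahat_identity (T : Fin n → MvPowerSeries (Fin (n + 1)) A)
    {P Q : MvPowerSeries (Fin (n + 1)) A} (hQP : Q * P = 1) (hPQ : P * Q = 1)
    (hflat : ∀ i j : Fin n,
      X (Fin.last n) * (fpderiv i.castSucc (T j) - fpderiv j.castSucc (T i)) +
        (T i * T j - T j * T i) = 0) (i : Fin n) :
    X (Fin.last n) * euler (Ahat T P Q i)
      = X (Fin.last n) * fpderiv i.castSucc (Bser T P Q) - X (Fin.last n) * Ahat T P Q i
        + (Ahat T P Q i * Bser T P Q - Bser T P Q * Ahat T P Q i) := by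
  have hgf : ∀ j : Fin n, X (Fin.last n) * fpderiv i.castSucc (Ahat T P Q j)
      = X (Fin.last n) * fpderiv j.castSucc (Ahat T P Q i)
        - (Ahat T P Q i * Ahat T P Q j - Ahat T P Q j * Ahat T P Q i) := by
    intro j
    apply rearrange
    have h := gauged_flat hQP hPQ (T i) (T j) i j (hflat i j)
    rw [mul_sub] at h
    exact h
  have hDB : fpderiv i.castSucc (Bser T P Q)
      = Ahat T P Q i + ∑ j : Fin n, X j.castSucc * fpderiv i.castSucc (Ahat T P Q j) := by
    rw [Bser, fpderiv_sum]
    have : ∀ j : Fin n, fpderiv i.castSucc (X j.castSucc * Ahat T P Q j)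
        = (if i = j then Ahat T P Q j else 0) + X j.castSucc * fpderiv i.castSucc (Ahat T P Q j) := by
      intro j
      rw [fpderiv_mul, fpderiv_X]
      congr 1
      rcases eq_or_ne i j with rfl | hij
      · rw [if_pos rfl, if_pos rfl, one_mul]
      · rw [if_neg, if_neg hij, zero_mul]
        exact fun h => hij (Fin.castSucc_injective n h)
    rw [Finset.sum_congr rfl fun j _ => this j, Finset.sum_add_distrib,
      Finset.sum_ite_eq (Finset.univ : Finset (Fin n)) i (fun j => Ahat T P Q j),
      if_pos (Finset.mem_univ i)]
  have hswap : ∀ (j : Fin n) (Y : MvPowerSeries (Fin (n + 1)) A),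
      X (Fin.last n) * (X j.castSucc * Y) = X j.castSucc * (X (Fin.last n) * Y) := by
    intro j Y
    rw [← mul_assoc, ← X_mul_comm, mul_assoc]
  have step : ∀ j : Fin n, X (Fin.last n) * (X j.castSucc * fpderiv i.castSucc (Ahat T P Q j))
      = X (Fin.last n) * (X j.castSucc * fpderiv j.castSucc (Ahat T P Q i))
        - (Ahat T P Q i * (X j.castSucc * Ahat T P Q j)
            - (X j.castSucc * Ahat T P Q j) * Ahat T P Q i) := by
    intro j
    rw [hswap j, hgf j, mul_sub, hswap j]
    congr 1
    rw [mul_sub]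
    congr 1
    · rw [← mul_assoc, ← mul_assoc, X_mul_comm]
    · rw [← mul_assoc]
  have hB : ∑ j : Fin n, X j.castSucc * Ahat T P Q j = Bser T P Q := rfl
  rw [hDB, mul_add, Finset.mul_sum,
    Finset.sum_congr rfl fun j _ => step j, Finset.sum_sub_distrib, Finset.sum_sub_distrib,
    ← Finset.mul_sum, ← Finset.mul_sum, ← Finset.sum_mul, hB, euler_eq_sum]
  abel

end Framing

namespace Framing
open Finset.HasAntidiagonal (antidiagonal mem_antidiagonal)

variable {n : ℕ} {A : Type*} [Ring A]

theorem succ_nsmul_eq_zero [Module ℚ A] {d : ℕ} {x : A} (h : (d + 1) • x = 0) : x = 0 := by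
  have h1 : (((d : ℚ) + 1)) • x = 0 := by
    have : (((d + 1 : ℕ) : ℚ)) • x = 0 := by rw [Nat.cast_smul_eq_nsmul]; exact h
    rwa [Nat.cast_add, Nat.cast_one] at this
  have h2 : ((d : ℚ) + 1)⁻¹ • (((d : ℚ) + 1) • x) = 0 := by rw [h1, smul_zero]
  rwa [smul_smul, inv_mul_cancel₀ (by positivity : ((d : ℚ) + 1) ≠ 0), one_smul] at h2

theorem coeff_Bser_tdeg_zero (T : Fin n → MvPowerSeries (Fin (n + 1)) A)
    (P Q : MvPowerSeries (Fin (n + 1)) A) {k : Fin (n + 1) →₀ ℕ} (h : tdeg k = 0) :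
    coeff k (Bser T P Q) = 0 := by
  rw [Bser, map_sum]
  apply Finset.sum_eq_zero
  intro j _
  exact coeff_X_mul_zero ((tdeg_eq_zero_iff k).1 h j) _

theorem coeff_add_eu (k : Fin (n + 1) →₀ ℕ) (f : MvPowerSeries (Fin (n + 1)) A) :
    coeff (k + eu n) (X (Fin.last n) * f) = coeff k f :=
  coeff_add_X_mul (Fin.last n) k f

theorem Ahat_indep [Module ℚ A] (T : Fin n → MvPowerSeries (Fin (n + 1)) A)
    {P Q : MvPowerSeries (Fin (n + 1)) A} (hQP : Q * P = 1) (hPQ : P * Q = 1)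
    (hflat : ∀ i j : Fin n,
      X (Fin.last n) * (fpderiv i.castSucc (T j) - fpderiv j.castSucc (T i)) +
        (T i * T j - T j * T i) = 0)
    (hBu : ∀ k : Fin (n + 1) →₀ ℕ, k (Fin.last n) ≠ 0 → coeff k (Bser T P Q) = 0)
    (i : Fin n) :
    ∀ k : Fin (n + 1) →₀ ℕ, k (Fin.last n) ≠ 0 → coeff k (Ahat T P Q i) = 0 := by
  suffices H : ∀ d : ℕ, ∀ k : Fin (n + 1) →₀ ℕ, tdeg k = d → k (Fin.last n) ≠ 0 →
      coeff k (Ahat T P Q i) = 0 by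
    intro k hk
    exact H (tdeg k) k rfl hk
  intro d
  induction d using Nat.strong_induction_on with
  | _ d IH =>
  intro k hkd hku
  have hid := congrArg (coeff (k + eu n)) (euler_Ahat_identity T hQP hPQ hflat i)
  rw [coeff_add_eu, coeff_euler, map_add, map_sub, coeff_add_eu, coeff_add_eu] at hid
  -- the derivative-of-B term vanishes
  have hDB0 : coeff k (fpderiv i.castSucc (Bser T P Q)) = 0 := by
    rw [coeff_fpderiv, hBu, smul_zero]
    rw [Finsupp.add_apply, Finsupp.single_apply,
      if_neg (Fin.castSucc_lt_last i).ne]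
    simpa using hku
  -- the commutator term vanishes
  have hcomm0 : coeff (k + eu n) (Ahat T P Q i * Bser T P Q - Bser T P Q * Ahat T P Q i)
      = 0 := by
    rw [map_sub, coeff_mul, coeff_mul]
    rw [Finset.sum_eq_zero, Finset.sum_eq_zero, sub_zero]
    · rintro ⟨a, b⟩ hab
      rw [mem_antidiagonal] at hab
      dsimp only at hab ⊢
      rcases eq_or_ne (a (Fin.last n)) 0 with ha | ha
      · rcases Nat.eq_zero_or_pos (tdeg a) with ha0 | ha0
        · rw [coeff_Bser_tdeg_zero T P Q ha0, zero_mul]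
        · have hbu : b (Fin.last n) ≠ 0 := by
            have := DFunLike.congr_fun hab (Fin.last n)
            rw [Finsupp.add_apply, Finsupp.add_apply, eu, Finsupp.single_eq_same] at this
            omega
          have hbd : tdeg b < d := by
            have := congrArg tdeg hab
            rw [tdeg_add, tdeg_add_eu, hkd] at this
            omega
          rw [IH (tdeg b) hbd b rfl hbu, mul_zero]
      · rw [hBu a ha, zero_mul]
    · rintro ⟨a, b⟩ hab
      rw [mem_antidiagonal] at hab
      dsimp only at hab ⊢
      rcases eq_or_ne (b (Fin.last n)) 0 with hb | hb
      · rcases Nat.eq_zero_or_pos (tdeg b) with hb0 | hb0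
        · rw [coeff_Bser_tdeg_zero T P Q hb0, mul_zero]
        · have hau : a (Fin.last n) ≠ 0 := by
            have := DFunLike.congr_fun hab (Fin.last n)
            rw [Finsupp.add_apply, Finsupp.add_apply, eu, Finsupp.single_eq_same] at this
            omega
          have had : tdeg a < d := by
            have := congrArg tdeg hab
            rw [tdeg_add, tdeg_add_eu, hkd] at this
            omega
          rw [IH (tdeg a) had a rfl hau, zero_mul]
      · rw [hBu b hb, mul_zero]
  rw [hDB0, hcomm0, zero_sub, add_zero] at hid
  have : (tdeg k + 1) • coeff k (Ahat T P Q i) = 0 := by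
    rw [succ_nsmul, hid]
    abel
  rw [hkd] at this
  exact succ_nsmul_eq_zero this

end Framing

namespace Framing
open Finset.HasAntidiagonal (antidiagonal mem_antidiagonal)

variable {n : ℕ} {A : Type*} [Ring A]

/-- the contraction `∑ tᵢ Tᵢ` of the connection matrices with the Euler field -/
def TS (T : Fin n → MvPowerSeries (Fin (n + 1)) A) : MvPowerSeries (Fin (n + 1)) A :=
  ∑ j : Fin n, X j.castSucc * T j

theorem coeff_TS_tdeg_zero (T : Fin n → MvPowerSeries (Fin (n + 1)) A)
    {k : Fin (n + 1) →₀ ℕ} (h : tdeg k = 0) : coeff k (TS T) = 0 := by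
  rw [TS, map_sum]
  apply Finset.sum_eq_zero
  intro j _
  exact coeff_X_mul_zero ((tdeg_eq_zero_iff k).1 h j) _

theorem tdeg_zero_last_zero {x : Fin (n + 1) →₀ ℕ} (h1 : tdeg x = 0)
    (h2 : x (Fin.last n) = 0) : x = 0 := by
  rw [eq_single_of_tdeg_eq_zero h1, h2, Finsupp.single_zero]

theorem tdeg_zero_zero : tdeg (0 : Fin (n + 1) →₀ ℕ) = 0 := by simp [tdeg]

/-- one step of the construction for `B` -/
def bNext (T : Fin n → MvPowerSeries (Fin (n + 1)) A) (d : ℕ)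
    (p b : (Fin (n + 1) →₀ ℕ) → A) : (Fin (n + 1) →₀ ℕ) → A := fun k =>
  if tdeg k ≤ d then b k
  else if tdeg k = d + 1 ∧ k (Fin.last n) = 0 then
    (∑ x ∈ antidiagonal k, coeff x.1 (TS T) * p x.2)
      - ∑ x ∈ antidiagonal k,
          (if x.2 ≠ k ∧ x.2 (Fin.last n) = 0 ∧ x.2 ≠ 0 then p x.1 * b x.2 else 0)
  else 0

/-- one step of the construction for `P` -/
def pNext [Module ℚ A] (T : Fin n → MvPowerSeries (Fin (n + 1)) A) (d : ℕ)
    (p b' : (Fin (n + 1) →₀ ℕ) → A) : (Fin (n + 1) →₀ ℕ) → A := fun k =>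
  if tdeg k ≤ d then p k
  else if tdeg k = d + 1 then
    ((d : ℚ) + 1)⁻¹ •
      ((∑ x ∈ antidiagonal (k + eu n),
          (if x.2 (Fin.last n) = 0 ∧ x.2 ≠ 0 then p x.1 * b' x.2 else 0))
        - ∑ x ∈ antidiagonal (k + eu n), coeff x.1 (TS T) * p x.2)
  else 0

/-- Inductive construction of the coefficients of the framing `P` (first component)
and of the `u`-independent gauged connection `B` (second component), by degree in `t`. -/
def stage [Module ℚ A] (T : Fin n → MvPowerSeries (Fin (n + 1)) A) :
    ℕ → (((Fin (n + 1) →₀ ℕ) → A) × ((Fin (n + 1) →₀ ℕ) → A))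
  | 0 => ⟨fun k => if k = 0 then 1 else 0, fun _ => 0⟩
  | (d + 1) =>
      ⟨pNext T d (stage T d).1 (bNext T d (stage T d).1 (stage T d).2),
       bNext T d (stage T d).1 (stage T d).2⟩

theorem stage_succ_fst [Module ℚ A] (T : Fin n → MvPowerSeries (Fin (n + 1)) A) (d : ℕ) :
    (stage T (d + 1)).1 = pNext T d (stage T d).1 (bNext T d (stage T d).1 (stage T d).2) :=
  rfl

theorem stage_succ_snd [Module ℚ A] (T : Fin n → MvPowerSeries (Fin (n + 1)) A) (d : ℕ) :
    (stage T (d + 1)).2 = bNext T d (stage T d).1 (stage T d).2 := rfl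

variable [Module ℚ A]

/-- coefficients of the framing -/
def pC (T : Fin n → MvPowerSeries (Fin (n + 1)) A) (k : Fin (n + 1) →₀ ℕ) : A :=
  (stage T (tdeg k)).1 k

/-- coefficients of the limit connection matrix -/
def bC (T : Fin n → MvPowerSeries (Fin (n + 1)) A) (k : Fin (n + 1) →₀ ℕ) : A :=
  (stage T (tdeg k)).2 k

theorem stage_fst_eq (T : Fin n → MvPowerSeries (Fin (n + 1)) A) (d : ℕ)
    (k : Fin (n + 1) →₀ ℕ) (h : tdeg k ≤ d) : (stage T d).1 k = pC T k := by
  induction d with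
  | zero => rw [pC, Nat.le_zero.1 h]
  | succ d IH =>
    rcases Nat.lt_or_ge (tdeg k) (d + 1) with h' | h'
    · have h'' : tdeg k ≤ d := Nat.lt_succ_iff.1 h'
      calc (stage T (d + 1)).1 k = (stage T d).1 k := by
            rw [stage_succ_fst, pNext, if_pos h'']
      _ = pC T k := IH h''
    · have : tdeg k = d + 1 := le_antisymm h h'
      rw [pC, this]

theorem stage_snd_eq (T : Fin n → MvPowerSeries (Fin (n + 1)) A) (d : ℕ)
    (k : Fin (n + 1) →₀ ℕ) (h : tdeg k ≤ d) : (stage T d).2 k = bC T k := by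
  induction d with
  | zero => rw [bC, Nat.le_zero.1 h]
  | succ d IH =>
    rcases Nat.lt_or_ge (tdeg k) (d + 1) with h' | h'
    · have h'' : tdeg k ≤ d := Nat.lt_succ_iff.1 h'
      calc (stage T (d + 1)).2 k = (stage T d).2 k := by
            rw [stage_succ_snd, bNext, if_pos h'']
      _ = bC T k := IH h''
    · have : tdeg k = d + 1 := le_antisymm h h'
      rw [bC, this]

theorem pC_tdeg_zero (T : Fin n → MvPowerSeries (Fin (n + 1)) A) {k : Fin (n + 1) →₀ ℕ}
    (h : tdeg k = 0) : pC T k = if k = 0 then 1 else 0 := by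
  rw [pC, h]
  rfl

theorem pC_zero (T : Fin n → MvPowerSeries (Fin (n + 1)) A) : pC T 0 = 1 := by
  rw [pC_tdeg_zero T tdeg_zero_zero, if_pos rfl]

theorem bC_tdeg_zero (T : Fin n → MvPowerSeries (Fin (n + 1)) A) {k : Fin (n + 1) →₀ ℕ}
    (h : tdeg k = 0) : bC T k = 0 := by
  rw [bC, h]
  rfl

theorem bC_last_ne_zero (T : Fin n → MvPowerSeries (Fin (n + 1)) A) {k : Fin (n + 1) →₀ ℕ}
    (h : k (Fin.last n) ≠ 0) : bC T k = 0 := by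
  rcases Nat.eq_zero_or_pos (tdeg k) with h0 | h0
  · exact bC_tdeg_zero T h0
  · obtain ⟨d, hd⟩ : ∃ d, tdeg k = d + 1 := ⟨tdeg k - 1, by omega⟩
    rw [bC, hd, stage_succ_snd, bNext, if_neg (by omega), if_neg (by tauto)]

end Framing

namespace Framing
open Finset.HasAntidiagonal (antidiagonal mem_antidiagonal)

variable {n : ℕ} {A : Type*} [Ring A] [Module ℚ A]

theorem bC_rec (T : Fin n → MvPowerSeries (Fin (n + 1)) A) {k : Fin (n + 1) →₀ ℕ} {d : ℕ}
    (hd : tdeg k = d + 1) (hl : k (Fin.last n) = 0) :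
    bC T k = (∑ x ∈ antidiagonal k, coeff x.1 (TS T) * pC T x.2)
      - ∑ x ∈ antidiagonal k,
          (if x.2 ≠ k ∧ x.2 (Fin.last n) = 0 ∧ x.2 ≠ 0 then pC T x.1 * bC T x.2 else 0) := by
  rw [bC, hd, stage_succ_snd, bNext, if_neg (by omega), if_pos ⟨hd, hl⟩]
  congr 1
  · refine Finset.sum_congr rfl fun x hx => ?_
    rw [mem_antidiagonal] at hx
    have hxd : tdeg x.1 + tdeg x.2 = d + 1 := by rw [← tdeg_add, hx, hd]
    rcases Nat.eq_zero_or_pos (tdeg x.1) with h0 | h0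
    · rw [coeff_TS_tdeg_zero T h0, zero_mul, zero_mul]
    · rw [stage_fst_eq T d x.2 (by omega)]
  · refine Finset.sum_congr rfl fun x hx => ?_
    rw [mem_antidiagonal] at hx
    have hxd : tdeg x.1 + tdeg x.2 = d + 1 := by rw [← tdeg_add, hx, hd]
    by_cases hg : x.2 ≠ k ∧ x.2 (Fin.last n) = 0 ∧ x.2 ≠ 0
    · rw [if_pos hg, if_pos hg]
      obtain ⟨h1, h2, h3⟩ := hg
      have hx2 : 0 < tdeg x.2 := by
        rcases Nat.eq_zero_or_pos (tdeg x.2) with h' | h'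
        · exact absurd (tdeg_zero_last_zero h' h2) h3
        · exact h'
      have hx2d : tdeg x.2 ≤ d := by
        rcases Nat.lt_or_ge (tdeg x.2) (d + 1) with h' | h'
        · omega
        · exfalso
          have hx1 : tdeg x.1 = 0 := by omega
          have hx1l : x.1 (Fin.last n) = 0 := by
            have := DFunLike.congr_fun hx (Fin.last n)
            rw [Finsupp.add_apply] at this
            omega
          rw [tdeg_zero_last_zero hx1 hx1l, zero_add] at hx
          exact h1 hx
      rw [stage_fst_eq T d x.1 (by omega), stage_snd_eq T d x.2 hx2d]
    · rw [if_neg hg, if_neg hg]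

theorem nsmul_inv_smul {d : ℕ} (y : A) : (d + 1) • (((d : ℚ) + 1)⁻¹ • y) = y := by
  rw [← Nat.cast_smul_eq_nsmul ℚ, smul_smul]
  push_cast
  rw [mul_inv_cancel₀ (by positivity : ((d : ℚ) + 1) ≠ 0), one_smul]

theorem pC_rec (T : Fin n → MvPowerSeries (Fin (n + 1)) A) {k : Fin (n + 1) →₀ ℕ} {d : ℕ}
    (hd : tdeg k = d + 1) :
    (d + 1) • pC T k = (∑ x ∈ antidiagonal (k + eu n),
          (if x.2 (Fin.last n) = 0 ∧ x.2 ≠ 0 then pC T x.1 * bC T x.2 else 0))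
      - ∑ x ∈ antidiagonal (k + eu n), coeff x.1 (TS T) * pC T x.2 := by
  rw [pC, hd, stage_succ_fst, pNext, if_neg (by omega), if_pos hd, nsmul_inv_smul]
  have hke : tdeg (k + eu n) = d + 1 := by rw [tdeg_add_eu, hd]
  congr 1
  · refine Finset.sum_congr rfl fun x hx => ?_
    rw [mem_antidiagonal] at hx
    have hxd : tdeg x.1 + tdeg x.2 = d + 1 := by rw [← tdeg_add, hx, hke]
    by_cases hg : x.2 (Fin.last n) = 0 ∧ x.2 ≠ 0
    · rw [if_pos hg, if_pos hg]
      have hx2 : 0 < tdeg x.2 := by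
        rcases Nat.eq_zero_or_pos (tdeg x.2) with h' | h'
        · exact absurd (tdeg_zero_last_zero h' hg.1) hg.2
        · exact h'
      rw [stage_fst_eq T d x.1 (by omega)]
      have : bNext T d (stage T d).1 (stage T d).2 = (stage T (d + 1)).2 :=
        (stage_succ_snd T d).symm
      rw [this, stage_snd_eq T (d + 1) x.2 (by omega)]
    · rw [if_neg hg, if_neg hg]
  · refine Finset.sum_congr rfl fun x hx => ?_
    rw [mem_antidiagonal] at hx
    have hxd : tdeg x.1 + tdeg x.2 = d + 1 := by rw [← tdeg_add, hx, hke]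
    rcases Nat.eq_zero_or_pos (tdeg x.1) with h0 | h0
    · rw [coeff_TS_tdeg_zero T h0, zero_mul, zero_mul]
    · rw [stage_fst_eq T d x.2 (by omega)]

end Framing

namespace Framing
open Finset.HasAntidiagonal (antidiagonal mem_antidiagonal)

variable {n : ℕ} {A : Type*} [Ring A] [Module ℚ A]

theorem tdeg_sub_eu (k : Fin (n + 1) →₀ ℕ) : tdeg (k - eu n) = tdeg k := by
  refine Finset.sum_congr rfl fun j _ => ?_
  rw [Finsupp.tsub_apply, eu, Finsupp.single_apply, if_neg (Fin.castSucc_lt_last j).ne']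
  omega

theorem eu_le_iff {k : Fin (n + 1) →₀ ℕ} : eu n ≤ k ↔ k (Fin.last n) ≠ 0 := by
  rw [eu, Finsupp.single_le_iff]
  omega

/-- the framing, as a power series -/
def Pser (T : Fin n → MvPowerSeries (Fin (n + 1)) A) : MvPowerSeries (Fin (n + 1)) A :=
  fun k => pC T k

/-- the limit connection matrices, as a power series -/
def Bc (T : Fin n → MvPowerSeries (Fin (n + 1)) A) : MvPowerSeries (Fin (n + 1)) A :=
  fun k => bC T k

theorem coeff_Pser (T : Fin n → MvPowerSeries (Fin (n + 1)) A) (k : Fin (n + 1) →₀ ℕ) :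
    coeff k (Pser T) = pC T k := rfl

theorem coeff_Bc (T : Fin n → MvPowerSeries (Fin (n + 1)) A) (k : Fin (n + 1) →₀ ℕ) :
    coeff k (Bc T) = bC T k := rfl

theorem guard_drop (T : Fin n → MvPowerSeries (Fin (n + 1)) A) (k : Fin (n + 1) →₀ ℕ) :
    ∑ x ∈ antidiagonal k, (if x.2 (Fin.last n) = 0 ∧ x.2 ≠ 0 then pC T x.1 * bC T x.2 else 0)
      = ∑ x ∈ antidiagonal k, pC T x.1 * bC T x.2 := by
  refine Finset.sum_congr rfl fun x _ => ?_
  by_cases hg : x.2 (Fin.last n) = 0 ∧ x.2 ≠ 0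
  · rw [if_pos hg]
  · rw [if_neg hg]
    rcases Decidable.not_and_iff_or_not.1 hg with h | h
    · rw [bC_last_ne_zero T h, mul_zero]
    · rw [Decidable.not_not.1 h, bC_tdeg_zero T tdeg_zero_zero, mul_zero]

theorem construction_CI (T : Fin n → MvPowerSeries (Fin (n + 1)) A) :
    X (Fin.last n) * euler (Pser T) + TS T * Pser T = Pser T * Bc T := by
  ext k
  rw [map_add, coeff_mul k (TS T) (Pser T), coeff_mul k (Pser T) (Bc T)]
  simp only [coeff_Pser, coeff_Bc]
  rcases Nat.eq_zero_or_pos (tdeg k) with h0 | h0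
  · have hXe : coeff k (X (Fin.last n) * euler (Pser T)) = 0 := by
      rcases eq_or_ne (k (Fin.last n)) 0 with hl | hl
      · exact coeff_X_mul_zero hl _
      · have hk : (k - eu n) + eu n = k := tsub_add_cancel_of_le (eu_le_iff.2 hl)
        calc coeff k (X (Fin.last n) * euler (Pser T))
            = coeff ((k - eu n) + eu n) (X (Fin.last n) * euler (Pser T)) := by rw [hk]
          _ = coeff (k - eu n) (euler (Pser T)) := coeff_add_eu _ _
          _ = tdeg (k - eu n) • pC T (k - eu n) := by rw [coeff_euler, coeff_Pser]
          _ = 0 := by rw [tdeg_sub_eu, h0, zero_smul]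
    rw [hXe, zero_add]
    rw [Finset.sum_eq_zero, Finset.sum_eq_zero]
    · intro x hx
      rw [mem_antidiagonal] at hx
      have hxd : tdeg x.1 + tdeg x.2 = 0 := by rw [← tdeg_add, hx, h0]
      rw [bC_tdeg_zero T (by omega), mul_zero]
    · intro x hx
      rw [mem_antidiagonal] at hx
      have hxd : tdeg x.1 + tdeg x.2 = 0 := by rw [← tdeg_add, hx, h0]
      rw [coeff_TS_tdeg_zero T (by omega), zero_mul]
  · obtain ⟨d, hd⟩ : ∃ d, tdeg k = d + 1 := ⟨tdeg k - 1, by omega⟩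
    rcases eq_or_ne (k (Fin.last n)) 0 with hl | hl
    · rw [coeff_X_mul_zero hl, zero_add]
      have hmem : ((0 : Fin (n + 1) →₀ ℕ), k) ∈ antidiagonal k :=
        mem_antidiagonal.2 (zero_add k)
      conv_rhs => rw [← Finset.add_sum_erase _ _ hmem]
      dsimp only
      rw [pC_zero, one_mul]
      have hguard0 : (if ((0 : Fin (n + 1) →₀ ℕ), k).2 ≠ k ∧
          ((0 : Fin (n + 1) →₀ ℕ), k).2 (Fin.last n) = 0 ∧ ((0 : Fin (n + 1) →₀ ℕ), k).2 ≠ 0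
          then pC T ((0 : Fin (n + 1) →₀ ℕ), k).1 * bC T ((0 : Fin (n + 1) →₀ ℕ), k).2 else 0)
          = 0 := by
        rw [if_neg]
        intro h
        exact h.1 rfl
      have herase : ∑ x ∈ (antidiagonal k).erase ((0 : Fin (n + 1) →₀ ℕ), k),
          pC T x.1 * bC T x.2
          = ∑ x ∈ antidiagonal k,
              (if x.2 ≠ k ∧ x.2 (Fin.last n) = 0 ∧ x.2 ≠ 0 then pC T x.1 * bC T x.2 else 0) := by
        rw [← Finset.sum_erase (f := fun x : (Fin (n + 1) →₀ ℕ) × (Fin (n + 1) →₀ ℕ) =>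
          if x.2 ≠ k ∧ x.2 (Fin.last n) = 0 ∧ x.2 ≠ 0 then pC T x.1 * bC T x.2 else 0)
          (antidiagonal k) hguard0]
        refine Finset.sum_congr rfl fun x hx => ?_
        rw [Finset.mem_erase, mem_antidiagonal] at hx
        have hx2 : x.2 ≠ k := by
          intro h
          apply hx.1
          have hx1 : x.1 = 0 := by
            have h' : x.1 + x.2 = 0 + x.2 := by rw [zero_add, hx.2, h]
            exact add_right_cancel h'
          rw [Prod.ext_iff]
          exact ⟨hx1, h⟩
        by_cases hg : x.2 (Fin.last n) = 0 ∧ x.2 ≠ 0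
        · rw [if_pos ⟨hx2, hg.1, hg.2⟩]
        · rw [if_neg (by tauto)]
          rcases Decidable.not_and_iff_or_not.1 hg with h | h
          · rw [bC_last_ne_zero T h, mul_zero]
          · rw [Decidable.not_not.1 h, bC_tdeg_zero T tdeg_zero_zero, mul_zero]
      rw [herase, bC_rec T hd hl, sub_add_cancel]
    · have hk : (k - eu n) + eu n = k := tsub_add_cancel_of_le (eu_le_iff.2 hl)
      have hm : tdeg (k - eu n) = d + 1 := by rw [tdeg_sub_eu, hd]
      have hXe : coeff k (X (Fin.last n) * euler (Pser T))
          = (d + 1) • pC T (k - eu n) := by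
        calc coeff k (X (Fin.last n) * euler (Pser T))
            = coeff ((k - eu n) + eu n) (X (Fin.last n) * euler (Pser T)) := by rw [hk]
          _ = coeff (k - eu n) (euler (Pser T)) := coeff_add_eu _ _
          _ = tdeg (k - eu n) • pC T (k - eu n) := by rw [coeff_euler, coeff_Pser]
          _ = (d + 1) • pC T (k - eu n) := by rw [hm]
      have hrec := pC_rec T hm
      rw [hk] at hrec
      rw [hXe, hrec, guard_drop, sub_add_cancel]

end Framing

namespace Framing
open Finset.HasAntidiagonal (antidiagonal mem_antidiagonal)

variable {n : ℕ} {A : Type*} [Ring A]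

theorem euler_equation (T : Fin n → MvPowerSeries (Fin (n + 1)) A)
    {P Q : MvPowerSeries (Fin (n + 1)) A} (hQP : Q * P = 1) (hPQ : P * Q = 1) :
    P * Bser T P Q = X (Fin.last n) * euler P + TS T * P := by
  have hpq' : ∀ x : MvPowerSeries (Fin (n + 1)) A, P * (Q * x) = x := by
    intro x; rw [← mul_assoc, hPQ, one_mul]
  have hswap : ∀ (s : Fin (n + 1)) (Y Z : MvPowerSeries (Fin (n + 1)) A),
      Z * (X s * Y) = X s * (Z * Y) := by
    intro s Y Z
    rw [← mul_assoc, ← X_mul_comm, mul_assoc]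
  have step : ∀ j : Fin n, P * (X j.castSucc * Ahat T P Q j)
      = X (Fin.last n) * (X j.castSucc * fpderiv j.castSucc P)
        + (X j.castSucc * T j) * P := by
    intro j
    rw [Ahat]
    calc P * (X j.castSucc *
          (X (Fin.last n) * (Q * fpderiv j.castSucc P) + Q * T j * P))
        = X j.castSucc * (P * (X (Fin.last n) * (Q * fpderiv j.castSucc P) + Q * T j * P)) := by
          rw [hswap]
      _ = X j.castSucc * (X (Fin.last n) * (P * (Q * fpderiv j.castSucc P)) + P * (Q * T j * P)) := by
          rw [mul_add, hswap]
      _ = X j.castSucc * (X (Fin.last n) * fpderiv j.castSucc P + T j * P) := by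
          rw [hpq', mul_assoc Q (T j) P, hpq']
      _ = X (Fin.last n) * (X j.castSucc * fpderiv j.castSucc P) + (X j.castSucc * T j) * P := by
          rw [mul_add, hswap, mul_assoc]
  rw [Bser, Finset.mul_sum, Finset.sum_congr rfl fun j _ => step j,
    Finset.sum_add_distrib, ← Finset.mul_sum, euler_eq_sum, ← Finset.sum_mul, ← TS]

theorem succ_nsmul_cancel [Module ℚ A] {e : ℕ} {x y : A}
    (h : (e + 1) • x = (e + 1) • y) : x = y := by
  have h0 : (e + 1) • (x - y) = 0 := by rw [smul_sub, h, sub_self]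
  have := succ_nsmul_eq_zero h0
  rwa [sub_eq_zero] at this

theorem coeff_unique [Module ℚ A] (T : Fin n → MvPowerSeries (Fin (n + 1)) A)
    {P₁ B₁ P₂ B₂ : MvPowerSeries (Fin (n + 1)) A}
    (ha₁ : ∀ k : Fin (n + 1) →₀ ℕ, tdeg k = 0 → coeff k P₁ = if k = 0 then 1 else 0)
    (ha₂ : ∀ k : Fin (n + 1) →₀ ℕ, tdeg k = 0 → coeff k P₂ = if k = 0 then 1 else 0)
    (hb₁ : ∀ k : Fin (n + 1) →₀ ℕ, tdeg k = 0 → coeff k B₁ = 0)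
    (hb₂ : ∀ k : Fin (n + 1) →₀ ℕ, tdeg k = 0 → coeff k B₂ = 0)
    (hc₁ : ∀ k : Fin (n + 1) →₀ ℕ, k (Fin.last n) ≠ 0 → coeff k B₁ = 0)
    (hc₂ : ∀ k : Fin (n + 1) →₀ ℕ, k (Fin.last n) ≠ 0 → coeff k B₂ = 0)
    (hd₁ : X (Fin.last n) * euler P₁ + TS T * P₁ = P₁ * B₁)
    (hd₂ : X (Fin.last n) * euler P₂ + TS T * P₂ = P₂ * B₂) :
    P₁ = P₂ := by
  suffices H : ∀ d : ℕ, ∀ k : Fin (n + 1) →₀ ℕ, tdeg k = d →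
      coeff k B₁ = coeff k B₂ ∧ coeff k P₁ = coeff k P₂ by
    ext k
    exact (H (tdeg k) k rfl).2
  intro d
  induction d using Nat.strong_induction_on with
  | _ d IH =>
  have IHp : ∀ k : Fin (n + 1) →₀ ℕ, tdeg k < d → coeff k P₁ = coeff k P₂ :=
    fun k h => (IH (tdeg k) h k rfl).2
  have IHb : ∀ k : Fin (n + 1) →₀ ℕ, tdeg k < d → coeff k B₁ = coeff k B₂ :=
    fun k h => (IH (tdeg k) h k rfl).1
  have hTSsum : ∀ K : Fin (n + 1) →₀ ℕ, tdeg K ≤ d →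
      ∑ x ∈ antidiagonal K, coeff x.1 (TS T) * coeff x.2 P₁
        = ∑ x ∈ antidiagonal K, coeff x.1 (TS T) * coeff x.2 P₂ := by
    intro K hK
    refine Finset.sum_congr rfl fun x hx => ?_
    rw [mem_antidiagonal] at hx
    have hxd : tdeg x.1 + tdeg x.2 = tdeg K := by rw [← tdeg_add, hx]
    rcases Nat.eq_zero_or_pos (tdeg x.1) with h0 | h0
    · rw [coeff_TS_tdeg_zero T h0, zero_mul, zero_mul]
    · rw [IHp x.2 (by omega)]
  have hBd : ∀ k : Fin (n + 1) →₀ ℕ, tdeg k = d → coeff k B₁ = coeff k B₂ := by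
    intro k hk
    rcases eq_or_ne (k (Fin.last n)) 0 with hl | hl
    · rcases Nat.eq_zero_or_pos d with rfl | hd0
      · rw [hb₁ k hk, hb₂ k hk]
      · have h₁ := congrArg (coeff k) hd₁
        have h₂ := congrArg (coeff k) hd₂
        rw [map_add, coeff_X_mul_zero hl, zero_add, coeff_mul, coeff_mul] at h₁ h₂
        have hmem : ((0 : Fin (n + 1) →₀ ℕ), k) ∈ antidiagonal k :=
          mem_antidiagonal.2 (zero_add k)
        rw [← Finset.add_sum_erase _ (fun x : (Fin (n + 1) →₀ ℕ) × (Fin (n + 1) →₀ ℕ) =>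
          coeff x.1 P₁ * coeff x.2 B₁) hmem] at h₁
        rw [← Finset.add_sum_erase _ (fun x : (Fin (n + 1) →₀ ℕ) × (Fin (n + 1) →₀ ℕ) =>
          coeff x.1 P₂ * coeff x.2 B₂) hmem] at h₂
        have h01 : coeff (0 : Fin (n + 1) →₀ ℕ) P₁ = 1 := by
          rw [ha₁ 0 tdeg_zero_zero, if_pos rfl]
        have h02 : coeff (0 : Fin (n + 1) →₀ ℕ) P₂ = 1 := by
          rw [ha₂ 0 tdeg_zero_zero, if_pos rfl]
        dsimp only at h₁ h₂
        rw [h01, one_mul] at h₁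
        rw [h02, one_mul] at h₂
        have herase : ∑ x ∈ (antidiagonal k).erase ((0 : Fin (n + 1) →₀ ℕ), k),
            coeff x.1 P₁ * coeff x.2 B₁
            = ∑ x ∈ (antidiagonal k).erase ((0 : Fin (n + 1) →₀ ℕ), k),
              coeff x.1 P₂ * coeff x.2 B₂ := by
          refine Finset.sum_congr rfl fun x hx => ?_
          rw [Finset.mem_erase, mem_antidiagonal] at hx
          have hxd : tdeg x.1 + tdeg x.2 = d := by rw [← tdeg_add, hx.2, hk]
          rcases eq_or_ne (x.2 (Fin.last n)) 0 with hxl | hxl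
          · rcases Nat.eq_zero_or_pos (tdeg x.2) with hx2 | hx2
            · rw [hb₁ x.2 hx2, hb₂ x.2 hx2, mul_zero, mul_zero]
            · have hx2d : tdeg x.2 < d := by
                rcases Nat.lt_or_ge (tdeg x.2) d with h' | h'
                · exact h'
                · exfalso
                  have hx1 : tdeg x.1 = 0 := by omega
                  have hx1l : x.1 (Fin.last n) = 0 := by
                    have := DFunLike.congr_fun hx.2 (Fin.last n)
                    rw [Finsupp.add_apply] at this
                    omega
                  have hx10 : x.1 = 0 := tdeg_zero_last_zero hx1 hx1l
                  apply hx.1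
                  rw [Prod.ext_iff]
                  refine ⟨hx10, ?_⟩
                  rw [← hx.2, hx10, zero_add]
              rw [IHp x.1 (by omega), IHb x.2 hx2d]
          · rw [hc₁ x.2 hxl, hc₂ x.2 hxl, mul_zero, mul_zero]
        have key := h₁.symm.trans ((hTSsum k (le_of_eq hk)).trans h₂)
        rw [← herase] at key
        exact add_right_cancel key
    · rw [hc₁ k hl, hc₂ k hl]
  refine fun k hk => ⟨hBd k hk, ?_⟩
  rcases Nat.eq_zero_or_pos d with rfl | hd0
  · rw [ha₁ k hk, ha₂ k hk]
  · obtain ⟨e, rfl⟩ : ∃ e, d = e + 1 := ⟨d - 1, by omega⟩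
    have h₁ := congrArg (coeff (k + eu n)) hd₁
    have h₂ := congrArg (coeff (k + eu n)) hd₂
    rw [map_add, coeff_add_eu, coeff_euler, coeff_mul, coeff_mul] at h₁ h₂
    have hke : tdeg (k + eu n) = e + 1 := by rw [tdeg_add_eu, hk]
    have hPB : ∑ x ∈ antidiagonal (k + eu n), coeff x.1 P₁ * coeff x.2 B₁
        = ∑ x ∈ antidiagonal (k + eu n), coeff x.1 P₂ * coeff x.2 B₂ := by
      refine Finset.sum_congr rfl fun x hx => ?_
      rw [mem_antidiagonal] at hx
      have hxd : tdeg x.1 + tdeg x.2 = e + 1 := by rw [← tdeg_add, hx, hke]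
      rcases eq_or_ne (x.2 (Fin.last n)) 0 with hxl | hxl
      · rcases Nat.eq_zero_or_pos (tdeg x.2) with hx2 | hx2
        · rw [hb₁ x.2 hx2, hb₂ x.2 hx2, mul_zero, mul_zero]
        · rw [IHp x.1 (by omega)]
          rcases Nat.lt_or_ge (tdeg x.2) (e + 1) with h' | h'
          · rw [IHb x.2 h']
          · rw [hBd x.2 (by omega)]
      · rw [hc₁ x.2 hxl, hc₂ x.2 hxl, mul_zero, mul_zero]
    rw [hPB] at h₁
    rw [hTSsum (k + eu n) (le_of_eq hke)] at h₁
    have hfin : tdeg k • coeff k P₁ = tdeg k • coeff k P₂ := by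
      have := h₁.trans h₂.symm
      exact add_right_cancel this
    rw [hk] at hfin
    exact succ_nsmul_cancel hfin

end Framing

namespace Framing
open Finset.HasAntidiagonal (antidiagonal mem_antidiagonal)

variable {n : ℕ} {A : Type*} [Ring A] [Module ℚ A]

theorem coeff_Bser_last [Module ℚ A] (T : Fin n → MvPowerSeries (Fin (n + 1)) A)
    (P Q : MvPowerSeries (Fin (n + 1)) A)
    (hA : ∀ (i : Fin n) (k : Fin (n + 1) →₀ ℕ), k (Fin.last n) ≠ 0 →
      coeff k (Ahat T P Q i) = 0)
    {k : Fin (n + 1) →₀ ℕ} (hk : k (Fin.last n) ≠ 0) : coeff k (Bser T P Q) = 0 := by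
  rw [Bser, map_sum]
  apply Finset.sum_eq_zero
  intro j _
  rw [coeff_X_mul']
  split_ifs with h
  · apply hA j
    rw [Finsupp.tsub_apply, Finsupp.single_apply, if_neg (Fin.castSucc_lt_last j).ne]
    simpa using hk
  · rfl

theorem main_exists_unique (T : Fin n → MvPowerSeries (Fin (n + 1)) A)
    (hflat : ∀ i j : Fin n,
      X (Fin.last n) * (fpderiv i.castSucc (T j) - fpderiv j.castSucc (T i)) +
        (T i * T j - T j * T i) = 0) :
    ∃! P : (MvPowerSeries (Fin (n + 1)) A)ˣ,
      (∀ k : Fin (n + 1) →₀ ℕ, (∀ i : Fin n, k i.castSucc = 0) →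
        (P : MvPowerSeries (Fin (n + 1)) A) k = (1 : MvPowerSeries (Fin (n + 1)) A) k) ∧
      (∀ i : Fin n, ∀ k : Fin (n + 1) →₀ ℕ, k (Fin.last n) ≠ 0 →
        ((X (Fin.last n) * ((↑P⁻¹ : MvPowerSeries (Fin (n + 1)) A) *
            fpderiv i.castSucc (P : MvPowerSeries (Fin (n + 1)) A))
          + (↑P⁻¹ : MvPowerSeries (Fin (n + 1)) A) * T i *
            (↑P : MvPowerSeries (Fin (n + 1)) A) :
            MvPowerSeries (Fin (n + 1)) A) k = 0)) := by
  classical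
  have hP0 : constantCoeff (Pser T) = ((1 : Aˣ) : A) := by
    rw [← coeff_zero_eq_constantCoeff_apply, coeff_Pser, pC_zero, Units.val_one]
  set Q : MvPowerSeries (Fin (n + 1)) A := invOfUnit (Pser T) 1 with hQdef
  have hPQ : Pser T * Q = 1 := mul_invOfUnit _ _ hP0
  have hQP : Q * Pser T = 1 := invOfUnit_mul _ _ hP0
  refine ⟨⟨Pser T, Q, hPQ, hQP⟩, ⟨?_, ?_⟩, ?_⟩
  · -- boundary condition
    intro k hk
    have h0 : tdeg k = 0 := (tdeg_eq_zero_iff k).2 hk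
    show coeff k (Pser T) = coeff k 1
    rw [coeff_Pser, pC_tdeg_zero T h0, coeff_one]
  · -- independence of u
    intro i k hk
    have hBeq : Bser T (Pser T) Q = Bc T := by
      have h1 : Pser T * Bser T (Pser T) Q = Pser T * Bc T := by
        rw [euler_equation T hQP hPQ, construction_CI]
      have h2 := congrArg (fun z => Q * z) h1
      simpa only [← mul_assoc, hQP, one_mul] using h2
    have hBu : ∀ k : Fin (n + 1) →₀ ℕ, k (Fin.last n) ≠ 0 →
        coeff k (Bser T (Pser T) Q) = 0 := by
      intro k hk
      rw [hBeq, coeff_Bc]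
      exact bC_last_ne_zero T hk
    exact Ahat_indep T hQP hPQ hflat hBu i k hk
  · -- uniqueness
    intro V ⟨hV1, hV2⟩
    apply Units.ext
    show (V : MvPowerSeries (Fin (n + 1)) A) = Pser T
    have hVQP : (↑V⁻¹ : MvPowerSeries (Fin (n + 1)) A) * ↑V = 1 := V.inv_mul
    have hVPQ : (↑V : MvPowerSeries (Fin (n + 1)) A) * ↑V⁻¹ = 1 := V.mul_inv
    have hAv : ∀ (i : Fin n) (k : Fin (n + 1) →₀ ℕ), k (Fin.last n) ≠ 0 →
        coeff k (Ahat T (↑V) (↑V⁻¹) i) = 0 := by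
      intro i k hk
      exact hV2 i k hk
    refine coeff_unique T (B₁ := Bser T ↑V ↑V⁻¹) (B₂ := Bc T) ?_ ?_ ?_ ?_ ?_ ?_ ?_ ?_
    · intro k h0
      have := hV1 k ((tdeg_eq_zero_iff k).1 h0)
      calc coeff k (↑V : MvPowerSeries (Fin (n + 1)) A)
          = coeff k (1 : MvPowerSeries (Fin (n + 1)) A) := this
        _ = if k = 0 then 1 else 0 := coeff_one _
    · intro k h0
      rw [coeff_Pser, pC_tdeg_zero T h0]
    · intro k h0
      exact coeff_Bser_tdeg_zero T ↑V ↑V⁻¹ h0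
    · intro k h0
      rw [coeff_Bc]
      exact bC_tdeg_zero T h0
    · intro k hk
      exact coeff_Bser_last T ↑V ↑V⁻¹ hAv hk
    · intro k hk
      rw [coeff_Bc]
      exact bC_last_ne_zero T hk
    · exact (euler_equation T hVQP hVPQ).symm
    · exact construction_CI T

end Framing

theorem stmt5 {n : ℕ} {R : Type*} [CommRing R] [Algebra ℚ R]
    {H : Type*} [AddCommGroup H] [Module R H] [Module.Free R H] [Module.Finite R H]
    (T : Fin n → MvPowerSeries (Fin (n + 1)) (Module.End R H))
    (hflat : ∀ i j : Fin n,
      X (Fin.last n) * (fpderiv i.castSucc (T j) - fpderiv j.castSucc (T i)) +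
        (T i * T j - T j * T i) = 0) :
    ∃! P : (MvPowerSeries (Fin (n + 1)) (Module.End R H))ˣ,
      -- `P(0,u) = id` : the restriction of `P` to `t = 0` is the identity
      (∀ k : Fin (n + 1) →₀ ℕ, (∀ i : Fin n, k i.castSucc = 0) →
        (P : MvPowerSeries (Fin (n + 1)) (Module.End R H)) k =
          (1 : MvPowerSeries (Fin (n + 1)) (Module.End R H)) k) ∧
      -- `u P⁻¹ ∂_{t_i}P + P⁻¹ T^i P` is independent of `u`
      (∀ i : Fin n, ∀ k : Fin (n + 1) →₀ ℕ, k (Fin.last n) ≠ 0 →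
        ((X (Fin.last n) * ((↑P⁻¹ : MvPowerSeries (Fin (n + 1)) (Module.End R H)) *
            fpderiv i.castSucc (P : MvPowerSeries (Fin (n + 1)) (Module.End R H)))
          + (↑P⁻¹ : MvPowerSeries (Fin (n + 1)) (Module.End R H)) * T i *
            (↑P : MvPowerSeries (Fin (n + 1)) (Module.End R H)) :
            MvPowerSeries (Fin (n + 1)) (Module.End R H)) k = 0)) := by
  letI : Module ℚ (Module.End R H) := Module.compHom (Module.End R H) (algebraMap ℚ R)
  exact Framing.main_exists_unique T hflat
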